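/- Let q ∈ ℂ with q ≠ −1, and let n ≥ 1 be an integer. Then the family of power series (η^{(q)}_{n,I})_{I ⊆ [n−1]} is linearly independent over ℂ. -/

import Mathlib

open Finset
open scoped Classical

namespace ExtPeaks

/-- `fget g j` is the `j`-th entry (1-indexed) of the sequence `g : Fin n → ℕ`,
so `fget g j = g ⟨j - 1, _⟩` for `1 ≤ j ≤ n`. -/
def fget {n : ℕ} (g : Fin n → ℕ) (j : ℕ) : ℕ :=
  if h : j - 1 < n then g ⟨j - 1, h⟩ else 0

/-- `Peak(I) = {i ∈ I : i ≥ 2 and i - 1 ∉ I}`. -/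
def peakOf (I : Finset ℕ) : Finset ℕ :=
  I.filter fun i => 2 ≤ i ∧ i - 1 ∉ I

/-- The monomial `x_{i_1} ⋯ x_{i_n}` attached to a sequence `g`, as a `Finsupp`. -/
noncomputable def monomialOf {n : ℕ} (g : Fin n → ℕ) : ℕ →₀ ℕ :=
  ∑ j, Finsupp.single (g j) 1

/-- The (finitely many) weakly increasing sequences of positive integers of length `n`,
satisfying the peak condition `i_{j-1} < i_{j+1}` for `j ∈ Peak(I)`, with monomial `d`. -/
noncomputable def Lseqs (n : ℕ) (I : Finset ℕ) (d : ℕ →₀ ℕ) : Finset (Fin n → ℕ) :=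
  (Fintype.piFinset fun _ => d.support).filter fun g =>
    (∀ j k : Fin n, j ≤ k → g j ≤ g k) ∧ (∀ j, 1 ≤ g j) ∧
    (∀ j ∈ peakOf I, fget g (j - 1) < fget g (j + 1)) ∧ monomialOf g = d

/-- The `q`-fundamental quasisymmetric function `L^{(q)}_{n,I}`, as a formal power
series in the variables `x_1, x_2, …` (defined coefficientwise). -/
noncomputable def Lq (q : ℂ) (n : ℕ) (I : Finset ℕ) : MvPowerSeries ℕ ℂ :=
  fun d => ∑ g ∈ Lseqs n I d,
    q ^ (I.filter fun j => fget g j = fget g (j + 1)).card *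
      (q + 1) ^ (Finset.image g Finset.univ).card

/-- The weakly increasing sequences of positive integers of length `s` with
`i_j = i_{j+1}` for all `j ∈ I`, with monomial `d`. -/
noncomputable def etaSeqs (s : ℕ) (I : Finset ℕ) (d : ℕ →₀ ℕ) : Finset (Fin s → ℕ) :=
  (Fintype.piFinset fun _ => d.support).filter fun g =>
    (∀ j k : Fin s, j ≤ k → g j ≤ g k) ∧ (∀ j, 1 ≤ g j) ∧
    (∀ j ∈ I, fget g j = fget g (j + 1)) ∧ monomialOf g = d

/-- The enriched `q`-monomial quasisymmetric function `η^{(q)}_{s,I}`. -/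
noncomputable def etaq (q : ℂ) (s : ℕ) (I : Finset ℕ) : MvPowerSeries ℕ ℂ :=
  fun d => ∑ g ∈ etaSeqs s I d, (q + 1) ^ (Finset.image g Finset.univ).card

/-- `I` is a `p`-extended peak set: `I ∪ {0}` contains no `p + 1` consecutive integers. -/
def IsExtPeakSet (p : ℕ) (I : Finset ℕ) : Prop :=
  ∀ a : ℕ, ¬ Finset.Icc a (a + p) ⊆ insert 0 I

/-- `s^{(p)}_n`: the number of `p`-extended peak subsets of `[n-1]`, with `s^{(p)}_0 = 0`. -/
noncomputable def sCount (p n : ℕ) : ℕ :=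
  if n = 0 then 0
  else ((Finset.Icc 1 (n - 1)).powerset.filter fun I => IsExtPeakSet p I).card

/-- The value `π(j)` of the permutation at the (1-indexed) position `j`,
as an element of `{1, …, n}`. -/
def pval {n : ℕ} (π : Equiv.Perm (Fin n)) (j : ℕ) : ℕ :=
  if h : j - 1 < n then (π ⟨j - 1, h⟩ : ℕ) + 1 else 0

/-- The descent set `Des(π) = {1 ≤ i ≤ n-1 : π(i) > π(i+1)}`. -/
def desSet {n : ℕ} (π : Equiv.Perm (Fin n)) : Finset ℕ :=
  (Finset.Icc 1 (n - 1)).filter fun i => pval π (i + 1) < pval π i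

/-- The peak set `Peak(π) = {2 ≤ i ≤ n-1 : π(i-1) < π(i) > π(i+1)}`. -/
def peakSet {n : ℕ} (π : Equiv.Perm (Fin n)) : Finset ℕ :=
  (Finset.Icc 2 (n - 1)).filter fun i =>
    pval π (i - 1) < pval π i ∧ pval π (i + 1) < pval π i

/-- The `p`-extended peak set `Peak_p(π)` of a permutation: the descents `i` such that
`i ≤ p - 1` or some position `i - j` (with `1 ≤ j ≤ p` and `i - j ≥ 1`) is not a descent. -/
def peakP {n : ℕ} (p : ℕ) (π : Equiv.Perm (Fin n)) : Finset ℕ :=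
  (desSet π).filter fun i =>
    i ≤ p - 1 ∨ ∃ j ∈ Finset.Icc 1 p, 1 ≤ i - j ∧ i - j ∉ desSet π

/-- `ρ_p = exp(-iπ(p-1)/(p+1))`. -/
noncomputable def rho (p : ℕ) : ℂ :=
  Complex.exp (-((Real.pi : ℂ) * ((p : ℂ) - 1) / ((p : ℂ) + 1)) * Complex.I)

/-- `[m]_c = 1 + c + ⋯ + c^(m-1)`. -/
noncomputable def qint (m : ℕ) (c : ℂ) : ℂ := ∑ j ∈ Finset.range m, c ^ j

/-- The entry of the transition matrix `B^{(q)}` at row `J`, column `I`: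
`Σ (-q)^{|K|} (q-1)^{|J'|}` over pairs `(J', K)` with `J' ⊆ I`, `K ⊆ Peak(I)`,
`J' ∩ K = ∅` and `J' ∪ (K-1) ∪ K = J`. -/
noncomputable def Bentry (q : ℂ) (J I : Finset ℕ) : ℂ :=
  ∑ J' ∈ I.powerset, ∑ K ∈ (peakOf I).powerset,
    if Disjoint J' K ∧ J' ∪ K.image (· - 1) ∪ K = J then
      (-q) ^ K.card * (q - 1) ^ J'.card
    else 0

/-- The collection of all subsets of `[n-1]` (the empty collection when `n = 0`,
so that `B_0` is the empty matrix). -/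
def subsetsOf (n : ℕ) : Finset (Finset ℕ) :=
  if n = 0 then ∅ else (Finset.Icc 1 (n - 1)).powerset

/-- The matrix `B_n^{(q)}`, with rows and columns indexed by the subsets of `[n-1]`. -/
noncomputable def Bmat (q : ℂ) (n : ℕ) : Matrix ↥(subsetsOf n) ↥(subsetsOf n) ℂ :=
  fun J I => Bentry q J.1 I.1

/-- The entry of `A_n^{(q)}` at row `J'`, column `I'`, namely
`B_n^{(q)}(J' ∪ {n-1}, I' ∪ {n-1})`. -/
noncomputable def Aentry (q : ℂ) (n : ℕ) (J I : Finset ℕ) : ℂ :=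
  Bentry q (insert (n - 1) J) (insert (n - 1) I)

/-- The matrix `A_n^{(q)}`, with rows and columns indexed by the subsets of `[n-2]`. -/
noncomputable def Amat (q : ℂ) (n : ℕ) :
    Matrix ↥(subsetsOf (n - 1)) ↥(subsetsOf (n - 1)) ℂ :=
  fun J I => Aentry q n J.1 I.1

/-- The dimension of the kernel of (the linear map associated with) `B_n^{(q)}`. -/
noncomputable def dimKer (q : ℂ) (n : ℕ) : ℕ :=
  Module.finrank ℂ (LinearMap.ker (Matrix.mulVecLin (Bmat q n)))

/-! ### Auxiliary lemmas for the proof of Statement 15 -/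

lemma monomialOf_count {n : ℕ} (g : Fin n → ℕ) :
    monomialOf g = Multiset.toFinsupp (Multiset.map g Finset.univ.val) := by
  ext a
  rw [monomialOf, Finset.sum_apply', Multiset.toFinsupp_apply, Multiset.count_map,
    ← Finset.filter_val, ← Finset.card_def, Finset.card_filter]
  simp [Finsupp.single_apply, eq_comm]

lemma eq_of_mono_of_monomialOf_eq {n : ℕ} {g g' : Fin n → ℕ}
    (hg : ∀ j k : Fin n, j ≤ k → g j ≤ g k)
    (hg' : ∀ j k : Fin n, j ≤ k → g' j ≤ g' k)
    (h : monomialOf g = monomialOf g') : g = g' := by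
  have hmul : Multiset.map g Finset.univ.val = Multiset.map g' Finset.univ.val := by
    have := monomialOf_count g ▸ monomialOf_count g' ▸ h
    exact Multiset.toFinsupp.injective this
  have hlist : (↑(List.ofFn g) : Multiset ℕ) = (↑(List.ofFn g') : Multiset ℕ) := by
    simpa only [Fin.univ_val_map] using hmul
  have hperm : List.Perm (List.ofFn g) (List.ofFn g') := Multiset.coe_eq_coe.mp hlist
  have heq : List.ofFn g = List.ofFn g' :=
    List.Perm.eq_of_sortedLE
      (List.sortedLE_ofFn_iff.mpr fun ⦃j k⦄ hjk => hg j k hjk)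
      (List.sortedLE_ofFn_iff.mpr fun ⦃j k⦄ hjk => hg' j k hjk) hperm
  exact List.ofFn_injective heq

lemma self_mem_support {n : ℕ} (g : Fin n → ℕ) (j : Fin n) :
    g j ∈ (monomialOf g).support := by
  rw [monomialOf_count, Finsupp.mem_support_iff, Multiset.toFinsupp_apply,
    Ne, Multiset.count_eq_zero, not_not]
  exact Multiset.mem_map.mpr ⟨j, Finset.mem_univ_val j, rfl⟩

/-- The value at (`0`-indexed) position `m` of the canonical weakly increasing sequence
attached to `I`. -/
def hval (I : Finset ℕ) (m : ℕ) : ℕ := 1 + ((Finset.Icc 1 m).filter fun k => k ∉ I).card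

lemma hval_mono (I : Finset ℕ) {m m' : ℕ} (h : m ≤ m') : hval I m ≤ hval I m' := by
  unfold hval
  exact Nat.add_le_add_left
    (Finset.card_le_card (Finset.filter_subset_filter _ (Finset.Icc_subset_Icc_right h))) 1

lemma hval_succ (I : Finset ℕ) (m : ℕ) :
    hval I (m + 1) = hval I m + if m + 1 ∈ I then 0 else 1 := by
  unfold hval
  rw [← Finset.insert_Icc_right_eq_Icc_add_one (Nat.one_le_iff_ne_zero.mpr (Nat.succ_ne_zero m)),
    Finset.filter_insert]
  by_cases hm : m + 1 ∈ I
  · rw [if_neg (not_not_intro hm), if_pos hm, add_zero]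
  · rw [if_pos hm, if_neg hm,
      Finset.card_insert_of_notMem (by simp)]
    omega

/-- The canonical weakly increasing sequence attached to `I`. -/
def gSeq (n : ℕ) (I : Finset ℕ) (j : Fin n) : ℕ := hval I (j : ℕ)

lemma gSeq_mono (n : ℕ) (I : Finset ℕ) :
    ∀ j k : Fin n, j ≤ k → gSeq n I j ≤ gSeq n I k :=
  fun _ _ hjk => hval_mono I hjk

lemma gSeq_pos (n : ℕ) (I : Finset ℕ) : ∀ j : Fin n, 1 ≤ gSeq n I j :=
  fun _ => Nat.le_add_right 1 _

lemma fget_gSeq {n : ℕ} (I : Finset ℕ) {j : ℕ} (h : j - 1 < n) :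
    fget (gSeq n I) j = hval I (j - 1) := by
  rw [fget, dif_pos h]; rfl

lemma fget_gSeq_eq_iff {n : ℕ} (hn : 1 ≤ n) (I : Finset ℕ) {j : ℕ}
    (hj : j ∈ Finset.Icc 1 (n - 1)) :
    fget (gSeq n I) j = fget (gSeq n I) (j + 1) ↔ j ∈ I := by
  obtain ⟨hj1, hj2⟩ := Finset.mem_Icc.mp hj
  have hjn : j < n := lt_of_le_of_lt hj2 (Nat.sub_lt hn one_pos)
  have h1 : j - 1 < n := lt_of_le_of_lt (Nat.sub_le _ _) hjn
  have h2 : j + 1 - 1 < n := by simpa using hjn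
  rw [fget_gSeq I h1, fget_gSeq I h2]
  have hj' : j + 1 - 1 = (j - 1) + 1 := by omega
  rw [hj', hval_succ, Nat.sub_add_cancel hj1]
  split
  · simp [*]
  · simp [*]

lemma etaSeqs_monomial_gSeq {n : ℕ} (hn : 1 ≤ n) (I J : Finset ℕ)
    (hJ : J ⊆ Finset.Icc 1 (n - 1)) :
    etaSeqs n J (monomialOf (gSeq n I)) = if J ⊆ I then {gSeq n I} else ∅ := by
  ext g
  rw [etaSeqs, Finset.mem_filter, Fintype.mem_piFinset]
  constructor
  · rintro ⟨hsup, hmono, hpos, heqs, hmon⟩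
    have hg : g = gSeq n I :=
      eq_of_mono_of_monomialOf_eq hmono (gSeq_mono n I) hmon
    subst hg
    have hJI : J ⊆ I := fun j hj =>
      (fget_gSeq_eq_iff hn I (hJ hj)).mp (heqs j hj)
    simp [hJI]
  · intro hg
    by_cases hJI : J ⊆ I
    · rw [if_pos hJI, Finset.mem_singleton] at hg
      subst hg
      refine ⟨fun j => self_mem_support _ j, gSeq_mono n I, gSeq_pos n I, ?_, rfl⟩
      exact fun j hj => (fget_gSeq_eq_iff hn I (hJ hj)).mpr (hJI hj)
    · rw [if_neg hJI] at hg
      exact absurd hg (Finset.notMem_empty g)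

lemma etaq_coeff_gSeq {n : ℕ} (q : ℂ) (hn : 1 ≤ n) (I J : Finset ℕ)
    (hJ : J ⊆ Finset.Icc 1 (n - 1)) :
    etaq q n J (monomialOf (gSeq n I)) =
      if J ⊆ I then (q + 1) ^ (Finset.image (gSeq n I) Finset.univ).card else 0 := by
  rw [etaq, etaSeqs_monomial_gSeq hn I J hJ]
  split <;> simp

/-- For `q ≠ -1`, the enriched `q`-monomial quasisymmetric functions
`(η^{(q)}_{n,I})_{I ⊆ [n-1]}` are linearly independent over `ℂ`. -/
theorem etaq_linearIndependent (q : ℂ) (hq : q ≠ -1) (n : ℕ) (hn : 1 ≤ n) :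
    LinearIndependent ℂ
      (fun I : {I : Finset ℕ // I ⊆ Finset.Icc 1 (n - 1)} => etaq q n I.1) := by
  have hq1 : q + 1 ≠ 0 := fun h => hq (eq_neg_of_add_eq_zero_left h)
  rw [linearIndependent_iff']
  intro s c hsum i hi
  -- Step 1: for every `I ⊆ [n-1]`, the sum of `c j` over `j ∈ s` with `j.1 ⊆ I` vanishes.
  have key : ∀ I : Finset ℕ, I ⊆ Finset.Icc 1 (n - 1) →
      ∑ j ∈ s.filter (fun j => j.1 ⊆ I), c j = 0 := by
    intro I hI
    have h0 := congrArg (MvPowerSeries.coeff (monomialOf (gSeq n I))) hsum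
    rw [map_sum, map_zero] at h0
    have h1 : ∀ j ∈ s,
        (MvPowerSeries.coeff (monomialOf (gSeq n I))) (c j • etaq q n j.1) =
          if j.1 ⊆ I then c j * (q + 1) ^ (Finset.image (gSeq n I) Finset.univ).card
          else 0 := by
      intro j _
      rw [map_smul, smul_eq_mul, MvPowerSeries.coeff_apply,
        etaq_coeff_gSeq q hn I j.1 j.2]
      split <;> simp
    rw [Finset.sum_congr rfl h1, Finset.sum_ite, Finset.sum_const_zero, add_zero,
      ← Finset.sum_mul] at h0
    rcases mul_eq_zero.mp h0 with h | h
    · exact h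
    · exact absurd h (pow_ne_zero _ hq1)
  -- Step 2: triangularity — strong induction on the cardinality of `i.1`.
  suffices H : ∀ m : ℕ, ∀ i ∈ s, i.1.card = m → c i = 0 from H i.1.card i hi rfl
  intro m
  induction m using Nat.strong_induction_on with
  | _ m ih =>
    intro i hi hm
    have h1 := key i.1 i.2
    have hsplit : s.filter (fun j => j.1 ⊆ i.1)
        = insert i (s.filter fun j => j.1 ⊂ i.1) := by
      ext j
      simp only [Finset.mem_filter, Finset.mem_insert]
      constructor
      · rintro ⟨hj, hsub⟩
        rcases eq_or_ne j i with rfl | hne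
        · exact Or.inl rfl
        · exact Or.inr ⟨hj, lt_of_le_of_ne hsub fun h => hne (Subtype.ext h)⟩
      · rintro (rfl | ⟨hj, hlt⟩)
        · exact ⟨hi, le_rfl⟩
        · exact ⟨hj, hlt.subset⟩
    have hnotmem : i ∉ s.filter (fun j => j.1 ⊂ i.1) := fun hmem =>
      ssubset_irrefl i.1 ((Finset.mem_filter.mp hmem).2)
    rw [hsplit, Finset.sum_insert hnotmem] at h1
    have h2 : ∑ j ∈ s.filter (fun j => j.1 ⊂ i.1), c j = 0 := by
      refine Finset.sum_eq_zero fun j hj => ?_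
      rw [Finset.mem_filter] at hj
      exact ih j.1.card (hm ▸ Finset.card_lt_card hj.2) j hj.1 rfl
    rw [h2, add_zero] at h1
    exact h1

end ExtPeaks
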